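/- For every integer n ≥ 2, the distance matrix D(K_{n,1}) of the star graph K_{n,1} is invertible, and its inverse M is the real (n+1)×(n+1) matrix with entries: M_{ii} = 1/(2n) - 1/2 for i in {1,...,n}; M_{ij} = 1/(2n) for distinct i, j in {1,...,n}; M_{i,n+1} = M_{n+1,i} = 1/n for i in {1,...,n}; and M_{n+1,n+1} = -2(n-1)/n. -/

import Mathlib

private lemma star_sum_ite_one {m : ℕ} (a : Fin m) (x c : ℝ) :
    ∑ k : Fin m, (if k = a then x else c) = x + ((m : ℝ) - 1) * c := by
  have h : ∀ k : Fin m, (if k = a then x else c) = c + (if k = a then x - c else 0) := by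
    intro k; by_cases h : k = a <;> simp [h]
  simp_rw [h]
  rw [Finset.sum_add_distrib, Finset.sum_const, Finset.sum_ite_eq' Finset.univ a]
  simp; ring

private lemma star_sum_ite_two {m : ℕ} {a b : Fin m} (hab : a ≠ b) (x y c : ℝ) :
    ∑ k : Fin m, (if k = a then x else if k = b then y else c)
      = x + y + ((m : ℝ) - 2) * c := by
  have h : ∀ k : Fin m, (if k = a then x else if k = b then y else c)
      = c + (if k = a then x - c else 0) + (if k = b then y - c else 0) := by
    intro k
    by_cases h1 : k = a
    · subst h1; simp [hab]
    · by_cases h2 : k = b <;> simp [h1, h2, Ne.symm hab]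
  simp_rw [h]
  rw [Finset.sum_add_distrib, Finset.sum_add_distrib, Finset.sum_const,
    Finset.sum_ite_eq' Finset.univ a, Finset.sum_ite_eq' Finset.univ b]
  simp; ring

/-- For every integer `n ≥ 2`, the distance matrix of the star graph `K_{n,1}` is
invertible, with the explicitly given inverse `M`. Vertices are `Fin (n+1)`; the part
`V₁` consists of indices `< n`, and the last index is the centre. -/
theorem inv_distanceMatrix_star (n : ℕ) (hn : 2 ≤ n)
    (D M : Matrix (Fin (n + 1)) (Fin (n + 1)) ℝ)
    (hD : ∀ i j : Fin (n + 1), D i j =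
      if i = j then 0 else if i.val < n ∧ j.val < n then 2 else 1)
    (hM : ∀ i j : Fin (n + 1), M i j =
      if i.val < n ∧ j.val < n then
        (if i = j then 1 / (2 * (n : ℝ)) - 1 / 2 else 1 / (2 * (n : ℝ)))
      else if i.val < n ∨ j.val < n then 1 / (n : ℝ)
      else -(2 * ((n : ℝ) - 1)) / (n : ℝ)) :
    IsUnit D ∧ D⁻¹ = M := by
  have hn0 : (n : ℝ) ≠ 0 := Nat.cast_ne_zero.mpr (by omega)
  have key : D * M = 1 := by
    ext i j
    rw [Matrix.mul_apply, Fin.sum_univ_castSucc]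
    rcases Fin.eq_castSucc_or_eq_last i with ⟨i', rfl⟩ | rfl <;>
      rcases Fin.eq_castSucc_or_eq_last j with ⟨j', rfl⟩ | rfl
    · -- both leaves
      have hterm : ∀ k : Fin n,
          D i'.castSucc k.castSucc * M k.castSucc j'.castSucc
            = (if k = i' then 0 else 2) *
              (if k = j' then 1 / (2 * (n : ℝ)) - 1 / 2 else 1 / (2 * (n : ℝ))) := by
        intro k
        rw [hD, hM]
        simp [Fin.castSucc_inj, k.is_lt, i'.is_lt, j'.is_lt, eq_comm]
      rw [Finset.sum_congr rfl (fun k _ => hterm k)]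
      rw [hD, hM]
      by_cases hij : i' = j'
      · subst hij
        have h2 : ∀ k : Fin n,
            (if k = i' then 0 else 2) *
              (if k = i' then 1 / (2 * (n : ℝ)) - 1 / 2 else 1 / (2 * (n : ℝ)))
              = (if k = i' then (0 : ℝ) else 2 * (1 / (2 * (n : ℝ)))) := by
          intro k; by_cases h : k = i' <;> simp [h]
        rw [Finset.sum_congr rfl (fun k _ => h2 k), star_sum_ite_one]
        simp [Fin.castSucc_inj, i'.is_lt, (Fin.castSucc_lt_last i').ne, Matrix.one_apply,
          Fin.val_last]
        field_simp
        ring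
      · have h2 : ∀ k : Fin n,
            (if k = i' then 0 else 2) *
              (if k = j' then 1 / (2 * (n : ℝ)) - 1 / 2 else 1 / (2 * (n : ℝ)))
              = (if k = i' then (0 : ℝ) else if k = j' then
                  2 * (1 / (2 * (n : ℝ)) - 1 / 2) else 2 * (1 / (2 * (n : ℝ)))) := by
          intro k
          by_cases h : k = i'
          · subst h; simp [hij]
          · by_cases h' : k = j' <;> simp [h, h']
        rw [Finset.sum_congr rfl (fun k _ => h2 k), star_sum_ite_two hij]
        simp [Fin.castSucc_inj, i'.is_lt, j'.is_lt, hij, (Fin.castSucc_lt_last i').ne,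
          Matrix.one_apply, Fin.val_last]
        field_simp
        ring
    · -- i leaf, j = centre
      have hterm : ∀ k : Fin n,
          D i'.castSucc k.castSucc * M k.castSucc (Fin.last n)
            = (if k = i' then 0 else 2) * (1 / (n : ℝ)) := by
        intro k
        rw [hD, hM]
        simp [Fin.castSucc_inj, k.is_lt, i'.is_lt, Fin.val_last, eq_comm,
          (Fin.castSucc_lt_last k).ne]
      rw [Finset.sum_congr rfl (fun k _ => hterm k)]
      have h2 : ∀ k : Fin n, (if k = i' then 0 else 2) * (1 / (n : ℝ))
          = (if k = i' then (0 : ℝ) else 2 * (1 / (n : ℝ))) := by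
        intro k; by_cases h : k = i' <;> simp [h]
      rw [Finset.sum_congr rfl (fun k _ => h2 k), star_sum_ite_one]
      rw [hD, hM]
      simp [(Fin.castSucc_lt_last i').ne, Matrix.one_apply, Fin.val_last, i'.is_lt]
      field_simp
      ring
    · -- i = centre, j leaf
      have hterm : ∀ k : Fin n,
          D (Fin.last n) k.castSucc * M k.castSucc j'.castSucc
            = (if k = j' then 1 / (2 * (n : ℝ)) - 1 / 2 else 1 / (2 * (n : ℝ))) := by
        intro k
        rw [hD, hM]
        simp [Fin.castSucc_inj, k.is_lt, j'.is_lt, Fin.val_last,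
          (Fin.castSucc_lt_last k).ne']
      rw [Finset.sum_congr rfl (fun k _ => hterm k), star_sum_ite_one]
      rw [hD, hM]
      simp [(Fin.castSucc_lt_last j').ne', Matrix.one_apply, Fin.val_last, j'.is_lt]
      field_simp
      ring
    · -- both centre
      have hterm : ∀ k : Fin n,
          D (Fin.last n) k.castSucc * M k.castSucc (Fin.last n) = 1 / (n : ℝ) := by
        intro k
        rw [hD, hM]
        simp [k.is_lt, Fin.val_last, (Fin.castSucc_lt_last k).ne']
      rw [Finset.sum_congr rfl (fun k _ => hterm k), Finset.sum_const]
      rw [hD, hM]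
      simp [Matrix.one_apply, Fin.val_last]
      field_simp
  have hinv : Invertible D := invertibleOfRightInverse D M key
  exact ⟨isUnit_of_invertible D, Matrix.inv_eq_right_inv key⟩
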